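/- ln(4/π) = ∫₀¹∫₀¹ (1-x₁)/((1 + x₁x₂)(-ln(x₁x₂))) dx₁ dx₂. -/

import Mathlib

open MeasureTheory Set Filter Real Topology
open scoped ENNReal

namespace Sondow

lemma integrableOn_rpow {a : ℝ} (ha : 0 ≤ a) :
    IntegrableOn (fun x : ℝ => x ^ a) (Ioo 0 1) := by
  have h := (intervalIntegral.intervalIntegrable_rpow' (a := 0) (b := 1)
    (by linarith : (-1:ℝ) < a)).1
  exact h.congr_set_ae Ioo_ae_eq_Ioc

lemma integral_rpow_Ioo {a : ℝ} (ha : 0 ≤ a) :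
    ∫ x in Ioo (0:ℝ) 1, x ^ a = 1/(a+1) := by
  rw [← integral_Ioc_eq_integral_Ioo, ← intervalIntegral.integral_of_le zero_le_one,
    integral_rpow (Or.inl (by linarith))]
  rw [Real.one_rpow, Real.zero_rpow (by positivity)]
  ring

noncomputable def p (a : ℝ) : ℝ := 1/((a+1)^2*(a+2)) - 1/((a+2)^2*(a+3))

lemma inner_y_int {a x : ℝ} (ha : 0 ≤ a) (hx : x ∈ Ioo (0:ℝ) 1) :
    ∫ y in Ioo (0:ℝ) 1, (1-x)*(1-x*y)*(x*y)^a
      = (1-x) * (x^a/(a+1)) - (1-x) * (x^(a+1)/(a+2)) := by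
  obtain ⟨hx0, hx1⟩ := hx
  have hcong : ∀ y ∈ Ioo (0:ℝ) 1, (1-x)*(1-x*y)*(x*y)^a
      = ((1-x)*x^a) * y^a - ((1-x)*x^(a+1)) * y^(a+1) := by
    intro y ⟨hy0, hy1⟩
    rw [Real.mul_rpow hx0.le hy0.le, Real.rpow_add_one hx0.ne', Real.rpow_add_one hy0.ne']
    ring
  rw [setIntegral_congr_fun measurableSet_Ioo hcong]
  rw [integral_sub ((integrableOn_rpow ha).const_mul _)
      ((integrableOn_rpow (by linarith : (0:ℝ) ≤ a+1)).const_mul _),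
    integral_const_mul, integral_const_mul, integral_rpow_Ioo ha,
    integral_rpow_Ioo (by linarith : (0:ℝ) ≤ a+1)]
  ring

lemma inner_x_val {a x : ℝ} (ha : 0 ≤ a) (hx : x ∈ Ioo (0:ℝ) 1) :
    0 ≤ (1-x) * (x^a/(a+1)) - (1-x) * (x^(a+1)/(a+2)) := by
  obtain ⟨hx0, hx1⟩ := hx
  have h1 : x ^ (a+1) ≤ x ^ a := Real.rpow_le_rpow_of_exponent_ge hx0 hx1.le (by linarith)
  have h2 : x ^ (a+1) ≥ 0 := Real.rpow_nonneg hx0.le _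
  have h3 : (0:ℝ) < a + 1 := by linarith
  have h4 : (0:ℝ) < a + 2 := by linarith
  have h5 : x^(a+1)/(a+2) ≤ x^a/(a+1) := by
    exact div_le_div₀ (Real.rpow_nonneg hx0.le a) h1 h3 (by linarith)
  nlinarith [Real.rpow_nonneg hx0.le a]

lemma outer_x_int {a : ℝ} (ha : 0 ≤ a) :
    ∫ x in Ioo (0:ℝ) 1, ((1-x) * (x^a/(a+1)) - (1-x) * (x^(a+1)/(a+2))) = p a := by
  have h0 : (0:ℝ) < a + 1 := by linarith
  have h1 : (0:ℝ) < a + 2 := by linarith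
  have h2 : (0:ℝ) < a + 3 := by linarith
  have hcong : ∀ x ∈ Ioo (0:ℝ) 1, ((1-x) * (x^a/(a+1)) - (1-x) * (x^(a+1)/(a+2)))
      = (1/(a+1)) * x^a - (1/(a+1)+1/(a+2)) * x^(a+1) + (1/(a+2)) * x^(a+2) := by
    intro x ⟨hx0, hx1⟩
    have e1 : x^(a+1) = x^a*x := Real.rpow_add_one hx0.ne' a
    have e2 : x^(a+2) = x^a*x*x := by
      rw [show a+2 = (a+1)+1 by ring, Real.rpow_add_one hx0.ne', e1]
    rw [e1, e2]
    field_simp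
    ring
  rw [setIntegral_congr_fun measurableSet_Ioo hcong]
  have i0 := integrableOn_rpow ha
  have i1 := integrableOn_rpow (by linarith : (0:ℝ) ≤ a+1)
  have i2 := integrableOn_rpow (by linarith : (0:ℝ) ≤ a+2)
  have isub : IntegrableOn
      (fun x : ℝ => 1/(a+1) * x^a - (1/(a+1)+1/(a+2)) * x^(a+1)) (Ioo 0 1) :=
    (i0.const_mul _).sub (i1.const_mul _)
  rw [integral_add isub (i2.const_mul _),
    integral_sub (i0.const_mul _) (i1.const_mul _),
    integral_const_mul, integral_const_mul, integral_const_mul,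
    integral_rpow_Ioo ha, integral_rpow_Ioo (by linarith : (0:ℝ) ≤ a+1),
    integral_rpow_Ioo (by linarith : (0:ℝ) ≤ a+2)]
  show _ = 1/((a+1)^2*(a+2)) - 1/((a+2)^2*(a+3))
  field_simp
  ring

section
variable {a x : ℝ}

lemma y_integrand_eq (ha : 0 ≤ a) (hx : x ∈ Ioo (0:ℝ) 1) :
    EqOn (fun y : ℝ => ((1-x)*x^a) * y^a - ((1-x)*x^(a+1)) * y^(a+1))
      (fun y : ℝ => (1-x)*(1-x*y)*(x*y)^a) (Ioo 0 1) := by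
  intro y ⟨hy0, hy1⟩
  obtain ⟨hx0, hx1⟩ := hx
  simp only
  rw [Real.mul_rpow hx0.le hy0.le, Real.rpow_add_one hx0.ne', Real.rpow_add_one hy0.ne']
  ring

lemma y_integrand_nonneg (ha : 0 ≤ a) (hx : x ∈ Ioo (0:ℝ) 1) {y : ℝ}
    (hy : y ∈ Ioo (0:ℝ) 1) : 0 ≤ (1-x)*(1-x*y)*(x*y)^a := by
  obtain ⟨hx0, hx1⟩ := hx; obtain ⟨hy0, hy1⟩ := hy
  have : x*y < 1 := by nlinarith
  have h2 := Real.rpow_nonneg (by positivity : (0:ℝ) ≤ x*y) a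
  have h3 : (0:ℝ) ≤ 1 - x*y := by linarith
  exact mul_nonneg (mul_nonneg (by linarith) h3) h2

lemma double_int (ha : 0 ≤ a) :
    ∫⁻ x in Ioo (0:ℝ) 1, ∫⁻ y in Ioo (0:ℝ) 1,
      ENNReal.ofReal ((1-x)*(1-x*y)*(x*y)^a) = ENNReal.ofReal (p a) := by
  have step1 : ∀ x ∈ Ioo (0:ℝ) 1, ∫⁻ y in Ioo (0:ℝ) 1,
      ENNReal.ofReal ((1-x)*(1-x*y)*(x*y)^a)
      = ENNReal.ofReal ((1-x) * (x^a/(a+1)) - (1-x) * (x^(a+1)/(a+2))) := by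
    intro x hx
    have hint : IntegrableOn (fun y : ℝ => (1-x)*(1-x*y)*(x*y)^a) (Ioo 0 1) := by
      refine IntegrableOn.congr_fun ?_ (y_integrand_eq ha hx) measurableSet_Ioo
      exact ((integrableOn_rpow ha).const_mul _).sub
        ((integrableOn_rpow (by linarith : (0:ℝ) ≤ a+1)).const_mul _)
    rw [← inner_y_int ha hx, ← ofReal_integral_eq_lintegral_ofReal hint
      (((ae_restrict_iff' measurableSet_Ioo).2 (Filter.Eventually.of_forall
        fun y hy => y_integrand_nonneg ha hx hy)))]
  rw [setLIntegral_congr_fun measurableSet_Ioo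
    step1]
  have hintx : IntegrableOn
      (fun x : ℝ => (1-x) * (x^a/(a+1)) - (1-x) * (x^(a+1)/(a+2))) (Ioo 0 1) := by
    have i0 := integrableOn_rpow ha
    have i1 := integrableOn_rpow (by linarith : (0:ℝ) ≤ a+1)
    have i2 := integrableOn_rpow (by linarith : (0:ℝ) ≤ a+2)
    refine IntegrableOn.congr_fun (((i0.const_mul (1/(a+1))).sub
      (i1.const_mul (1/(a+1)+1/(a+2)))).add (i2.const_mul (1/(a+2))))
      ?_ measurableSet_Ioo
    intro x ⟨hx0, hx1⟩
    simp only [Pi.add_apply, Pi.sub_apply]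
    have e1 : x^(a+1) = x^a*x := Real.rpow_add_one hx0.ne' a
    have e2 : x^(a+2) = x^a*x*x := by
      rw [show a+2 = (a+1)+1 by ring, Real.rpow_add_one hx0.ne', e1]
    rw [e1, e2]
    field_simp
    ring
  rw [← ofReal_integral_eq_lintegral_ofReal hintx
    ((ae_restrict_iff' measurableSet_Ioo).2 (Filter.Eventually.of_forall
      fun x hx => inner_x_val ha hx)), outer_x_int ha]


end

lemma p_nonneg {a : ℝ} (ha : 0 ≤ a) : 0 ≤ p a := by
  have h1 : (0:ℝ) < (a+1)^2*(a+2) := by positivity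
  have h2 : (a+1)^2*(a+2) ≤ (a+2)^2*(a+3) := by nlinarith
  have := one_div_le_one_div_of_le h1 h2
  unfold p; linarith

noncomputable def F (c t : ℝ) : ℝ :=
  -(1/(t+(c+1))) + 1/(t+(c+2)) - Real.log (t+(c+1)) + 2*Real.log (t+(c+2))
    - Real.log (t+(c+3))

set_option maxHeartbeats 1000000 in
lemma hasDerivAt_F {c t : ℝ} (hc : 0 ≤ c) (ht : 0 ≤ t) :
    HasDerivAt (F c) (p (t + c)) t := by
  have key : ∀ d : ℝ, 1 ≤ d → (0:ℝ) < t + d := fun d hd => by linarith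
  have hlog : ∀ d : ℝ, 1 ≤ d →
      HasDerivAt (fun t : ℝ => Real.log (t+d)) (1/(t+d)) t := by
    intro d hd
    simpa using ((hasDerivAt_id t).add_const d).log (key d hd).ne'
  have hinv : ∀ d : ℝ, 1 ≤ d →
      HasDerivAt (fun t : ℝ => -(1/(t+d))) (1/(t+d)^2) t := by
    intro d hd
    have h := (((hasDerivAt_id t).add_const d).inv (key d hd).ne').neg
    simpa [one_div, neg_div, neg_neg, Pi.neg_def, Pi.inv_def] using h
  have h1 := hinv (c+1) (by linarith)
  have h2 : HasDerivAt (fun t : ℝ => 1/(t+(c+2))) (-(1/(t+(c+2))^2)) t := by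
    simpa [Pi.neg_def] using (hinv (c+2) (by linarith)).neg
  have h3 := hlog (c+1) (by linarith)
  have h4 := (hlog (c+2) (by linarith)).const_mul (2:ℝ)
  have h5 := hlog (c+3) (by linarith)
  have hF := (((h1.add h2).sub h3).add h4).sub h5
  have hp1 := key (c+1) (by linarith)
  have hp2 := key (c+2) (by linarith)
  have hp3 := key (c+3) (by linarith)
  have heq : p (t + c) = 1/(t+(c+1))^2 + -(1/(t+(c+2))^2) - 1/(t+(c+1))
      + 2*(1/(t+(c+2))) - 1/(t+(c+3)) := by
    unfold p
    rw [show t+c+1 = t+(c+1) by ring, show t+c+2 = t+(c+2) by ring,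
      show t+c+3 = t+(c+3) by ring]
    field_simp [hp1.ne', hp2.ne', hp3.ne']
    ring
  rw [heq]
  exact hF

lemma tendsto_one_div_add (c : ℝ) :
    Tendsto (fun t : ℝ => 1/(t+c)) atTop (𝓝 0) := by
  simpa [one_div, Function.comp_def] using
    tendsto_inv_atTop_zero.comp (tendsto_atTop_add_const_right atTop c tendsto_id)

lemma tendsto_log_ratio {c c' : ℝ} (hc : 0 < c) (hc' : 0 < c') :
    Tendsto (fun t : ℝ => Real.log (t+c) - Real.log (t+c')) atTop (𝓝 0) := by
  have h1 : Tendsto (fun t : ℝ => 1 + (c-c')*(1/(t+c'))) atTop (𝓝 1) := by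
    have := (tendsto_one_div_add c').const_mul (c-c')
    simpa using tendsto_const_nhds.add this
  have h2 : Tendsto (fun t : ℝ => Real.log (1 + (c-c')*(1/(t+c')))) atTop (𝓝 0) := by
    simpa using h1.log one_ne_zero
  apply h2.congr'
  filter_upwards [eventually_gt_atTop 0] with t ht
  have htc : (0:ℝ) < t + c := by linarith
  have htc' : (0:ℝ) < t + c' := by linarith
  rw [← Real.log_div htc.ne' htc'.ne']
  · congr 1
    field_simp
    ring
  
lemma tendsto_F (c : ℝ) (hc : 0 ≤ c) : Tendsto (F c) atTop (𝓝 0) := by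
  have l1 := (tendsto_one_div_add (c+1)).neg
  have l2 := tendsto_one_div_add (c+2)
  have l3 := (tendsto_log_ratio (by linarith : (0:ℝ) < c+1) (by linarith : (0:ℝ) < c+2)).neg
  have l4 := tendsto_log_ratio (by linarith : (0:ℝ) < c+2) (by linarith : (0:ℝ) < c+3)
  have := ((l1.add l2).add l3).add l4
  simp only [neg_zero, add_zero, neg_neg] at this ⊢
  apply this.congr
  intro t
  unfold F
  ring

lemma integral_p (c : ℝ) (hc : 0 ≤ c) :
    ∫ t in Ioi (0:ℝ), p (t + c)
      = 1/(c+1) - 1/(c+2) + Real.log (c+1) + Real.log (c+3) - 2*Real.log (c+2) := by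
  rw [integral_Ioi_of_hasDerivAt_of_nonneg' (g := F c)
    (fun t ht => hasDerivAt_F hc ht) (fun t ht => p_nonneg (by simp at ht; linarith))
    (tendsto_F c hc)]
  unfold F
  simp only [zero_add]
  ring

lemma integrableOn_p (c : ℝ) (hc : 0 ≤ c) :
    IntegrableOn (fun t => p (t + c)) (Ioi (0:ℝ)) :=
  integrableOn_Ioi_deriv_of_nonneg' (fun t ht => hasDerivAt_F hc ht)
    (fun t ht => p_nonneg (by simp at ht; linarith)) (tendsto_F c hc)

lemma t_int (c : ℝ) (hc : 0 ≤ c) :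
    ∫⁻ t in Ioi (0:ℝ), ENNReal.ofReal (p (t + c))
      = ENNReal.ofReal (1/(c+1) - 1/(c+2) + Real.log (c+1) + Real.log (c+3)
          - 2*Real.log (c+2)) := by
  rw [← integral_p c hc, ← ofReal_integral_eq_lintegral_ofReal (integrableOn_p c hc)]
  exact (ae_restrict_iff' measurableSet_Ioi).2 (Filter.Eventually.of_forall
    fun t ht => p_nonneg (by simp at ht; linarith))

lemma integral_rpow_Ioi {r : ℝ} (h0 : 0 < r) (h1 : r < 1) :
    ∫ t in Ioi (0:ℝ), r ^ t = 1/(-Real.log r) := by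
  have hlr : Real.log r < 0 := Real.log_neg h0 h1
  have hderiv : ∀ t ∈ Ici (0:ℝ),
      HasDerivAt (fun t : ℝ => r ^ t / Real.log r) (r ^ t) t := by
    intro t _
    have h := ((Real.hasStrictDerivAt_const_rpow h0 t).hasDerivAt).div_const (Real.log r)
    simpa [mul_comm, mul_div_assoc, hlr.ne] using h
  have htend : Tendsto (fun t : ℝ => r ^ t / Real.log r) atTop (𝓝 0) := by
    have h1' : Tendsto (fun t : ℝ => r ^ t) atTop (𝓝 0) := by
      have : Tendsto (fun t : ℝ => Real.exp (Real.log r * t)) atTop (𝓝 0) :=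
        Real.tendsto_exp_atBot.comp
          (tendsto_id.const_mul_atTop_of_neg hlr)
      apply this.congr
      intro t
      rw [Real.rpow_def_of_pos h0]
    simpa using h1'.div_const (Real.log r)
  rw [integral_Ioi_of_hasDerivAt_of_nonneg' hderiv
    (fun t _ => Real.rpow_nonneg h0.le t) htend]
  rw [Real.rpow_zero]
  ring
lemma integrableOn_rpow_Ioi {r : ℝ} (h0 : 0 < r) (h1 : r < 1) :
    IntegrableOn (fun t : ℝ => r ^ t) (Ioi (0:ℝ)) := by
  have hlr : Real.log r < 0 := Real.log_neg h0 h1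
  refine integrableOn_Ioi_deriv_of_nonneg' (l := 0) (g := fun t : ℝ => r ^ t / Real.log r)
    ?_ (fun t _ => Real.rpow_nonneg h0.le t) ?_
  · intro t _
    have h := ((Real.hasStrictDerivAt_const_rpow h0 t).hasDerivAt).div_const (Real.log r)
    simpa [mul_comm, mul_div_assoc, hlr.ne] using h
  · have h1' : Tendsto (fun t : ℝ => r ^ t) atTop (𝓝 0) := by
      have : Tendsto (fun t : ℝ => Real.exp (Real.log r * t)) atTop (𝓝 0) :=
        Real.tendsto_exp_atBot.comp (tendsto_id.const_mul_atTop_of_neg hlr)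
      apply this.congr
      intro t
      rw [Real.rpow_def_of_pos h0]
    simpa using h1'.div_const (Real.log r)

lemma lintegral_rpow_Ioi {r : ℝ} (h0 : 0 < r) (h1 : r < 1) :
    ∫⁻ t in Ioi (0:ℝ), ENNReal.ofReal (r ^ t) = ENNReal.ofReal (1/(-Real.log r)) := by
  rw [← integral_rpow_Ioi h0 h1,
    ← ofReal_integral_eq_lintegral_ofReal (integrableOn_rpow_Ioi h0 h1)
      (Filter.Eventually.of_forall fun t => Real.rpow_nonneg h0.le t)]

/-- pointwise series expansion -/
lemma series_pt {x y t : ℝ} (hx : x ∈ Ioo (0:ℝ) 1) (hy : y ∈ Ioo (0:ℝ) 1) :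
    ENNReal.ofReal ((1-x) * (x*y) ^ t / (1+x*y))
      = ∑' k : ℕ, ENNReal.ofReal ((1-x)*(1-x*y)*((x*y)^(t + 2*(k:ℝ)))) := by
  obtain ⟨hx0, hx1⟩ := hx; obtain ⟨hy0, hy1⟩ := hy
  set r := x*y with hr
  have hr0 : 0 < r := by positivity
  have hr1 : r < 1 := by nlinarith
  have hterm : ∀ k : ℕ, (1-x)*(1-r)*(r^(t + 2*(k:ℝ)))
      = ((1-x)*(1-r)*r^t) * (r^2)^k := by
    intro k
    rw [Real.rpow_add hr0, show (2*(k:ℝ)) = ((2*k : ℕ) : ℝ) by push_cast; ring,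
      Real.rpow_natCast, pow_mul]
    ring
  have hsummable : Summable (fun k : ℕ => ((1-x)*(1-r)*r^t) * (r^2)^k) :=
    (summable_geometric_of_lt_one (by positivity) (by nlinarith)).mul_left _
  have hnn : ∀ k : ℕ, 0 ≤ (1-x)*(1-r)*(r^(t + 2*(k:ℝ))) := by
    intro k
    have := Real.rpow_nonneg hr0.le (t + 2*(k:ℝ))
    have h1 : (0:ℝ) ≤ 1 - r := by linarith
    have h2 : (0:ℝ) ≤ 1 - x := by linarith
    positivity
  rw [← ENNReal.ofReal_tsum_of_nonneg hnn (by
    apply Summable.congr hsummable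
    intro k
    rw [hterm k])]
  congr 1
  have : ∑' k : ℕ, (1-x)*(1-r)*(r^(t + 2*(k:ℝ)))
      = ((1-x)*(1-r)*r^t) * ∑' k : ℕ, (r^2)^k := by
    rw [← tsum_mul_left]
    exact tsum_congr hterm
  rw [this, tsum_geometric_of_lt_one (by positivity) (by nlinarith)]
  have hden : 1 - r^2 = (1-r)*(1+r) := by ring
  have h1r : (0:ℝ) < 1 - r := by linarith
  have h1pr : (0:ℝ) < 1 + r := by linarith
  rw [hden]
  field_simp

noncomputable def T (k : ℕ) : ℝ :=
  1/(2*(k:ℝ)+1) - 1/(2*(k:ℝ)+2) + Real.log (2*(k:ℝ)+1) + Real.log (2*(k:ℝ)+3)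
    - 2*Real.log (2*(k:ℝ)+2)

noncomputable def E (n : ℕ) : ℝ := ∫ x in Ioo (0:ℝ) 1, x^n/(1+x)

lemma integrableOn_E (n : ℕ) :
    IntegrableOn (fun x : ℝ => x^n/(1+x)) (Ioo 0 1) := by
  apply (ContinuousOn.integrableOn_compact isCompact_Icc ?_).mono_set Ioo_subset_Icc_self
  apply ContinuousOn.div (continuous_pow n).continuousOn (by fun_prop)
  intro x hx
  have := hx.1
  positivity

lemma integrableOn_pow (n : ℕ) :
    IntegrableOn (fun x : ℝ => x^n) (Ioo 0 1) :=
  (ContinuousOn.integrableOn_compact isCompact_Icc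
    (continuous_pow n).continuousOn).mono_set Ioo_subset_Icc_self

lemma integral_pow_Ioo (n : ℕ) : ∫ x in Ioo (0:ℝ) 1, x^n = 1/((n:ℝ)+1) := by
  rw [← integral_Ioc_eq_integral_Ioo, ← intervalIntegral.integral_of_le zero_le_one,
    integral_pow]
  simp

lemma E_zero : E 0 = Real.log 2 := by
  unfold E
  have : (fun x : ℝ => x^0/(1+x)) = fun x : ℝ => (fun u : ℝ => u⁻¹) (x+1) := by
    funext x; simp [one_div, add_comm]
  rw [this, ← integral_Ioc_eq_integral_Ioo, ← intervalIntegral.integral_of_le zero_le_one,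
    intervalIntegral.integral_comp_add_right (fun u : ℝ => u⁻¹) 1]
  norm_num


lemma E_rec (n : ℕ) : E n + E (n+1) = 1/((n:ℝ)+1) := by
  unfold E
  rw [← integral_add (integrableOn_E n) (integrableOn_E (n+1))]
  rw [← integral_pow_Ioo n]
  apply setIntegral_congr_fun measurableSet_Ioo
  intro x ⟨hx0, hx1⟩
  have h : (0:ℝ) < 1 + x := by linarith
  field_simp
  ring

lemma E_nonneg (n : ℕ) : 0 ≤ E n :=
  setIntegral_nonneg measurableSet_Ioo fun x hx => by
    have := hx.1; positivity

lemma E_le (n : ℕ) : E n ≤ 1/((n:ℝ)+1) := by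
  rw [← integral_pow_Ioo n]
  apply setIntegral_mono_on (integrableOn_E n) (integrableOn_pow n) measurableSet_Ioo
  intro x ⟨hx0, hx1⟩
  apply div_le_self (by positivity) (by linarith)

lemma A_eq (N : ℕ) :
    ∑ k ∈ Finset.range N, (1/(2*(k:ℝ)+1) - 1/(2*(k:ℝ)+2)) = Real.log 2 - E (2*N) := by
  induction N with
  | zero => simp [E_zero]
  | succ N ih =>
    rw [Finset.sum_range_succ, ih]
    have r1 := E_rec (2*N)
    have r2 := E_rec (2*N+1)
    have : (2*(N+1) : ℕ) = (2*N+1)+1 := by ring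
    rw [this]
    push_cast at r1 r2 ⊢
    have e : (2*(N:ℝ)+1+1) = 2*(N:ℝ)+2 := by ring
    rw [e] at r2
    linarith

lemma tendsto_A :
    Tendsto (fun N => ∑ k ∈ Finset.range N, (1/(2*(k:ℝ)+1) - 1/(2*(k:ℝ)+2)))
      atTop (𝓝 (Real.log 2)) := by
  simp only [A_eq]
  have hE : Tendsto (fun N : ℕ => E (2*N)) atTop (𝓝 0) := by
    apply squeeze_zero (fun N => E_nonneg _) (fun N => E_le _)
    have h2 : Tendsto (fun N : ℕ => (2*(N:ℝ))+1) atTop atTop :=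
      tendsto_atTop_add_const_right _ 1
        (tendsto_natCast_atTop_atTop.const_mul_atTop two_pos)
    have h3 := tendsto_inv_atTop_zero.comp h2
    simp only [one_div]
    apply h3.congr
    intro N
    simp [Function.comp]
  simpa using tendsto_const_nhds.sub hE

lemma L_eq (N : ℕ) :
    ∑ k ∈ Finset.range N, (Real.log (2*(k:ℝ)+1) + Real.log (2*(k:ℝ)+3)
        - 2*Real.log (2*(k:ℝ)+2))
      = - Real.log (∏ i ∈ Finset.range N,
          ((2*(i:ℝ)+2)/(2*(i:ℝ)+1)) * ((2*(i:ℝ)+2)/(2*(i:ℝ)+3))) := by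
  rw [Real.log_prod]
  · rw [← Finset.sum_neg_distrib]
    apply Finset.sum_congr rfl
    intro i _
    have h1 : (0:ℝ) < 2*(i:ℝ)+1 := by positivity
    have h2 : (0:ℝ) < 2*(i:ℝ)+2 := by positivity
    have h3 : (0:ℝ) < 2*(i:ℝ)+3 := by positivity
    rw [Real.log_mul (by positivity) (by positivity),
      Real.log_div h2.ne' h1.ne', Real.log_div h2.ne' h3.ne']
    ring
  · intro i _
    have h1 : (0:ℝ) < 2*(i:ℝ)+1 := by positivity
    have h3 : (0:ℝ) < 2*(i:ℝ)+3 := by positivity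
    positivity

lemma tendsto_L :
    Tendsto (fun N => ∑ k ∈ Finset.range N, (Real.log (2*(k:ℝ)+1)
        + Real.log (2*(k:ℝ)+3) - 2*Real.log (2*(k:ℝ)+2)))
      atTop (𝓝 (- Real.log (Real.pi/2))) := by
  simp only [L_eq]
  exact (Real.tendsto_prod_pi_div_two.log (ne_of_gt (by positivity))).neg

lemma T_nonneg' (k : ℕ) : 0 ≤ T k := by
  show (0:ℝ) ≤ 1/(2*(k:ℝ)+1) - 1/(2*(k:ℝ)+2) + Real.log (2*(k:ℝ)+1)
    + Real.log (2*(k:ℝ)+3) - 2*Real.log (2*(k:ℝ)+2)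
  rw [← integral_p (2*(k:ℝ)) (by positivity)]
  apply setIntegral_nonneg measurableSet_Ioi
  intro t ht
  exact p_nonneg (by simp only [mem_Ioi] at ht; positivity)

lemma hasSum_T : HasSum T (Real.log (4/Real.pi)) := by
  rw [hasSum_iff_tendsto_nat_of_nonneg T_nonneg']
  have key : ∀ N, ∑ k ∈ Finset.range N, T k
      = ∑ k ∈ Finset.range N, (1/(2*(k:ℝ)+1) - 1/(2*(k:ℝ)+2))
        + ∑ k ∈ Finset.range N, (Real.log (2*(k:ℝ)+1) + Real.log (2*(k:ℝ)+3)
            - 2*Real.log (2*(k:ℝ)+2)) := by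
    intro N
    rw [← Finset.sum_add_distrib]
    apply Finset.sum_congr rfl
    intro k _
    unfold T
    ring
  simp only [key]
  have hlog : Real.log 2 + - Real.log (Real.pi / 2) = Real.log (4/Real.pi) := by
    have h4 : (4:ℝ)/Real.pi = 2/(Real.pi/2) := by
      rw [div_div_eq_mul_div]
      ring_nf
    rw [h4, Real.log_div two_ne_zero (by positivity)]
    ring
  rw [← hlog]
  exact tendsto_A.add tendsto_L


noncomputable def v (k : ℕ) (x y t : ℝ) : ℝ≥0∞ :=
  ENNReal.ofReal ((1-x)*(1-x*y)*Real.exp (Real.log (x*y) * (t + 2*(k:ℝ))))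

lemma v_eq (k : ℕ) {x y : ℝ} (hx : x ∈ Ioo (0:ℝ) 1) (hy : y ∈ Ioo (0:ℝ) 1) (t : ℝ) :
    v k x y t = ENNReal.ofReal ((1-x)*(1-x*y)*((x*y)^(t + 2*(k:ℝ)))) := by
  have hr0 : 0 < x*y := mul_pos hx.1 hy.1
  rw [v, Real.rpow_def_of_pos hr0]

lemma v_meas (k : ℕ) : Measurable (fun q : ℝ × ℝ × ℝ => v k q.1 q.2.1 q.2.2) := by
  apply ENNReal.measurable_ofReal.comp
  refine Measurable.mul (Measurable.mul ?_ ?_) ?_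
  · exact measurable_const.sub measurable_fst
  · exact measurable_const.sub (measurable_fst.mul measurable_snd.fst)
  · exact Real.measurable_exp.comp
      ((Real.measurable_log.comp (measurable_fst.mul measurable_snd.fst)).mul
        (measurable_snd.snd.add_const _))

lemma double_int_v (k : ℕ) {t : ℝ} (ht : 0 ≤ t) :
    ∫⁻ x in Ioo (0:ℝ) 1, ∫⁻ y in Ioo (0:ℝ) 1, v k x y t
      = ENNReal.ofReal (p (t + 2*(k:ℝ))) := by
  rw [← double_int (a := t + 2*(k:ℝ)) (by positivity)]
  apply setLIntegral_congr_fun measurableSet_Ioo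
  intro x hx
  apply setLIntegral_congr_fun measurableSet_Ioo
  intro y hy
  exact v_eq k hx hy t

lemma main_lintegral :
    ∫⁻ x in Ioo (0:ℝ) 1, ∫⁻ y in Ioo (0:ℝ) 1,
        ENNReal.ofReal ((1 - x) / ((1 + x * y) * (-Real.log (x * y))))
      = ENNReal.ofReal (Real.log (4/Real.pi)) := by
  have step1 : ∀ x ∈ Ioo (0:ℝ) 1, ∀ y ∈ Ioo (0:ℝ) 1,
      ENNReal.ofReal ((1 - x) / ((1 + x * y) * (-Real.log (x * y))))
        = ∑' k : ℕ, ∫⁻ t in Ioi (0:ℝ), v k x y t := by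
    intro x hx y hy
    obtain ⟨hx0, hx1⟩ := hx; obtain ⟨hy0, hy1⟩ := hy
    have hr0 : 0 < x*y := by positivity
    have hr1 : x*y < 1 := by nlinarith
    have hc0 : 0 ≤ (1-x)/(1+x*y) := by
      apply div_nonneg (by linarith) (by positivity)
    have e1 : (1 - x) / ((1 + x * y) * (-Real.log (x * y)))
        = ((1-x)/(1+x*y)) * (1/(-Real.log (x*y))) := by
      rw [div_mul_eq_div_div, div_eq_mul_one_div]
    rw [e1, ENNReal.ofReal_mul hc0, ← lintegral_rpow_Ioi hr0 hr1,
      ← lintegral_const_mul' _ _ ENNReal.ofReal_ne_top]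
    have e2 : ∀ t : ℝ, ENNReal.ofReal ((1-x)/(1+x*y)) * ENNReal.ofReal ((x*y)^t)
        = ∑' k : ℕ, v k x y t := by
      intro t
      rw [← ENNReal.ofReal_mul hc0]
      have h3 : (1-x)/(1+x*y) * (x*y)^t = (1-x) * (x*y)^t / (1+x*y) := by ring
      rw [h3, series_pt ⟨hx0, hx1⟩ ⟨hy0, hy1⟩]
      exact tsum_congr fun k => (v_eq k ⟨hx0, hx1⟩ ⟨hy0, hy1⟩ t).symm
    rw [lintegral_congr e2]
    apply lintegral_tsum
    intro k
    exact ((v_meas k).comp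
      (measurable_const.prodMk (measurable_const.prodMk measurable_id))).aemeasurable
  rw [setLIntegral_congr_fun measurableSet_Ioo
    (fun x hx => setLIntegral_congr_fun measurableSet_Ioo
      (fun y hy => step1 x hx y hy))]
  have measy : ∀ k : ℕ, Measurable (fun q : ℝ × ℝ =>
      ∫⁻ t in Ioi (0:ℝ), v k q.1 q.2 t) := by
    intro k
    apply Measurable.lintegral_prod_right'
      (f := fun q : (ℝ × ℝ) × ℝ => v k q.1.1 q.1.2 q.2)
    exact (v_meas k).comp ((measurable_fst.fst).prodMk
      ((measurable_fst.snd).prodMk measurable_snd))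
  have step2 : ∫⁻ x in Ioo (0:ℝ) 1, ∫⁻ y in Ioo (0:ℝ) 1,
        (∑' k : ℕ, ∫⁻ t in Ioi (0:ℝ), v k x y t)
      = ∑' k : ℕ, ∫⁻ x in Ioo (0:ℝ) 1, ∫⁻ y in Ioo (0:ℝ) 1,
          ∫⁻ t in Ioi (0:ℝ), v k x y t := by
    rw [← lintegral_tsum (f := fun (k : ℕ) (x : ℝ) => ∫⁻ y in Ioo (0:ℝ) 1,
        ∫⁻ t in Ioi (0:ℝ), v k x y t)
      (fun k => ((measy k).lintegral_prod_right').aemeasurable)]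
    apply lintegral_congr
    intro x
    rw [← lintegral_tsum (f := fun (k : ℕ) (y : ℝ) => ∫⁻ t in Ioi (0:ℝ), v k x y t)
      (fun k =>
      ((measy k).comp (measurable_const.prodMk measurable_id)).aemeasurable)]
  rw [step2]
  -- Step 3: swap t to the outside, per k
  have step3 : ∀ k : ℕ, ∫⁻ x in Ioo (0:ℝ) 1, ∫⁻ y in Ioo (0:ℝ) 1,
        ∫⁻ t in Ioi (0:ℝ), v k x y t = ENNReal.ofReal (T k) := by
    intro k
    have swapyt : ∀ x : ℝ, ∫⁻ y in Ioo (0:ℝ) 1, ∫⁻ t in Ioi (0:ℝ), v k x y t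
        = ∫⁻ t in Ioi (0:ℝ), ∫⁻ y in Ioo (0:ℝ) 1, v k x y t := by
      intro x
      apply lintegral_lintegral_swap
      exact ((v_meas k).comp (measurable_const.prodMk
        (measurable_fst.prodMk measurable_snd))).aemeasurable
    simp_rw [swapyt]
    have swapxt : ∫⁻ x in Ioo (0:ℝ) 1, ∫⁻ t in Ioi (0:ℝ),
          (∫⁻ y in Ioo (0:ℝ) 1, v k x y t)
        = ∫⁻ t in Ioi (0:ℝ), ∫⁻ x in Ioo (0:ℝ) 1,
          (∫⁻ y in Ioo (0:ℝ) 1, v k x y t) := by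
      apply lintegral_lintegral_swap
      apply Measurable.aemeasurable
      apply Measurable.lintegral_prod_right'
        (f := fun q : (ℝ × ℝ) × ℝ => v k q.1.1 q.2 q.1.2)
      exact (v_meas k).comp ((measurable_fst.fst).prodMk
        (measurable_snd.prodMk measurable_fst.snd))
    rw [swapxt]
    have hcong : ∀ t ∈ Ioi (0:ℝ), ∫⁻ x in Ioo (0:ℝ) 1, ∫⁻ y in Ioo (0:ℝ) 1, v k x y t
        = ENNReal.ofReal (p (t + 2*(k:ℝ))) := fun t ht => double_int_v k (le_of_lt ht)
    rw [setLIntegral_congr_fun measurableSet_Ioi hcong,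
      t_int (2*(k:ℝ)) (by positivity)]
    rfl
  simp_rw [step3]
  rw [← ENNReal.ofReal_tsum_of_nonneg T_nonneg' hasSum_T.summable, hasSum_T.tsum_eq]

end Sondow

open Sondow in

theorem sondow_log_four_div_pi :
    Real.log (4 / Real.pi)
      = ∫ x in Set.Ioo (0:ℝ) 1, ∫ y in Set.Ioo (0:ℝ) 1,
          (1 - x) / ((1 + x * y) * (-Real.log (x * y))) ∂volume ∂volume := by
  have fm : Measurable (fun q : ℝ × ℝ =>
      (1 - q.1)/((1 + q.1*q.2)*(-Real.log (q.1*q.2)))) := by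
    apply Measurable.div
    · exact measurable_const.sub measurable_fst
    · exact (measurable_const.add (measurable_fst.mul measurable_snd)).mul
        ((Real.measurable_log.comp (measurable_fst.mul measurable_snd)).neg)
  set g : ℝ → ℝ≥0∞ := fun x => ∫⁻ y in Ioo (0:ℝ) 1,
    ENNReal.ofReal ((1 - x) / ((1 + x * y) * (-Real.log (x * y)))) with hg
  have gmeas : Measurable g :=
    Measurable.lintegral_prod_right' (ENNReal.measurable_ofReal.comp fm)
  have hnn : ∀ x ∈ Ioo (0:ℝ) 1, ∀ y ∈ Ioo (0:ℝ) 1,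
      0 ≤ (1 - x) / ((1 + x * y) * (-Real.log (x * y))) := by
    intro x ⟨hx0, hx1⟩ y ⟨hy0, hy1⟩
    have hr0 : 0 < x*y := by positivity
    have hr1 : x*y < 1 := by nlinarith
    have hlog : Real.log (x*y) < 0 := Real.log_neg hr0 hr1
    apply div_nonneg (by linarith)
    apply mul_nonneg (by positivity) (by linarith)
  have inner_eq : ∀ x ∈ Ioo (0:ℝ) 1,
      ∫ y in Ioo (0:ℝ) 1, (1 - x) / ((1 + x * y) * (-Real.log (x * y)))
        = (g x).toReal := by
    intro x hx
    rw [integral_eq_lintegral_of_nonneg_ae]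
    · exact (ae_restrict_iff' measurableSet_Ioo).2
        (Filter.Eventually.of_forall (fun y hy => hnn x hx y hy))
    · exact ((fm.comp (measurable_prodMk_left)).aestronglyMeasurable)
  rw [setIntegral_congr_fun measurableSet_Ioo inner_eq]
  have gfin : ∀ᵐ x ∂(volume.restrict (Ioo (0:ℝ) 1)), g x < ⊤ := by
    apply ae_lt_top gmeas
    rw [main_lintegral]
    exact ENNReal.ofReal_ne_top
  have conv2 : ∫ x in Ioo (0:ℝ) 1, (g x).toReal
      = (∫⁻ x in Ioo (0:ℝ) 1, ENNReal.ofReal ((g x).toReal)).toReal := by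
    rw [integral_eq_lintegral_of_nonneg_ae
      (Filter.Eventually.of_forall (fun x => ENNReal.toReal_nonneg))
      gmeas.ennreal_toReal.aestronglyMeasurable]
  rw [conv2, lintegral_congr_ae (gfin.mono (fun x hx => ENNReal.ofReal_toReal hx.ne)),
    main_lintegral, ENNReal.toReal_ofReal]
  apply Real.log_nonneg
  rw [le_div_iff₀ Real.pi_pos]
  linarith [Real.pi_le_four]
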